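/- Let n ≥ k ≥ 2 and let S be a nonempty extremal family of k-element subsets of [n], and let a be the k-binomial decomposition of |S|. Then for every x ∈ [n], the degree satisfies |S(x)| ≤ B(a−1, k−1). -/

import Mathlib

/-- Generalized binomial coefficient `C(n, j)`:
`C(n,j) = n(n-1)⋯(n-j+1)/j!` for `j ≥ 0` and `C(n,j) = 0` for `j < 0`. -/
def C (n j : ℤ) : ℤ :=
  if 0 ≤ j then
    if 0 ≤ n then ((n.toNat.choose j.toNat : ℕ) : ℤ)
    else (-1) ^ j.toNat * (((j - n - 1).toNat.choose j.toNat : ℕ) : ℤ)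
  else 0

/-- `B a k = Σ_l C(a_l, k - l)`. -/
def B : List ℤ → ℤ → ℤ
  | [], _ => 0
  | x :: xs, k => C x k + B xs (k - 1)

/-- `a` has the shape of a `k`-binomial decomposition: strictly decreasing,
length at most `k`, and `a_i ≥ k - i` for every index. -/
def IsKBinomSeq (k : ℕ) (a : List ℤ) : Prop :=
  a.Chain' (· > ·) ∧ a.length ≤ k ∧ ∀ i < a.length, (k : ℤ) - i ≤ a.getD i 0

/-- `a` is the `k`-binomial decomposition of `m`. -/
def IsKBinom (k : ℕ) (m : ℤ) (a : List ℤ) : Prop :=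
  IsKBinomSeq k a ∧ m = B a (k : ℤ)

/-- Non-strict lexicographic order on integer sequences. -/
def lexLE (x y : List ℤ) : Prop := x = y ∨ List.Lex (· < ·) x y

/-- A family `T` of `j`-element sets is extremal if `|Δ(T)| = B(d, j-1)`
where `d` is the `j`-binomial decomposition of `|T|`. -/
def IsExtremal {α : Type} [DecidableEq α] (j : ℕ) (T : Finset (Finset α)) : Prop :=
  ∃ d : List ℤ, IsKBinom j (T.card : ℤ) d ∧ ((Finset.shadow T).card : ℤ) = B d ((j : ℤ) - 1)


open Finset Finset.Colex

namespace KKAux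

lemma C_neg {x j : ℤ} (hj : j < 0) : C x j = 0 := by simp [C, not_le.mpr hj]

lemma C_eq {x j : ℤ} (hx : 0 ≤ x) (hj : 0 ≤ j) :
    C x j = (x.toNat.choose j.toNat : ℤ) := by simp [C, hj, hx]

lemma C_coe (x j : ℕ) : C (x : ℤ) (j : ℤ) = (x.choose j : ℤ) := by
  rw [C_eq (by positivity) (by positivity)]; simp

lemma C_nonneg {x j : ℤ} (hx : 0 ≤ x) : 0 ≤ C x j := by
  rw [C]
  split_ifs with h1 h2
  · positivity
  · omega

lemma C_pos {x j : ℤ} (hj : 0 ≤ j) (hx : j ≤ x) : 0 < C x j := by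
  rw [C_eq (hj.trans hx) hj]
  exact_mod_cast Nat.choose_pos (by omega)

lemma C_mono {x y j : ℤ} (hj : 0 ≤ j) (hx : 0 ≤ x) (hxy : x ≤ y) : C x j ≤ C y j := by
  rw [C_eq hx hj, C_eq (hx.trans hxy) hj]
  exact_mod_cast Nat.choose_le_choose _ (by omega)

lemma C_pascal {x j : ℤ} (hx : 1 ≤ x) : C x j = C (x - 1) j + C (x - 1) (j - 1) := by
  rcases lt_trichotomy j 0 with hj | hj | hj
  · rw [C_neg hj, C_neg hj, C_neg (by omega)]; ring
  · subst hj
    rw [C_eq (by omega) le_rfl, C_eq (by omega) le_rfl, C_neg (by omega)]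
    simp
  · rw [C_eq (by omega) hj.le, C_eq (by omega) (by omega), C_eq (by omega) (by omega)]
    have h1 : x.toNat = (x - 1).toNat + 1 := by omega
    have h2 : j.toNat = (j - 1).toNat + 1 := by omega
    rw [h1, h2, Nat.choose_succ_succ']
    push_cast; ring

lemma B_neg : ∀ {l : List ℤ} {j : ℤ}, j < 0 → B l j = 0
  | [], _, _ => rfl
  | x :: xs, j, hj => by
    rw [B, C_neg hj, B_neg (by omega)]; ring

lemma B_nonneg : ∀ {l : List ℤ} {j : ℤ}, (∀ y ∈ l, 0 ≤ y) → 0 ≤ B l j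
  | [], _, _ => le_rfl
  | x :: xs, j, h => by
    rw [B]
    have := B_nonneg (l := xs) (j := j - 1) (fun y hy => h y (List.mem_cons_of_mem _ hy))
    have := C_nonneg (j := j) (h x (List.mem_cons_self))
    omega

lemma B_pascal : ∀ {l : List ℤ} {j : ℤ}, (∀ y ∈ l, 1 ≤ y) →
    B l j = B (l.map (· - 1)) j + B (l.map (· - 1)) (j - 1)
  | [], _, _ => by simp [B]
  | x :: xs, j, h => by
    rw [List.map_cons, B, B, B, B_pascal (l := xs) (j := j - 1)
      (fun y hy => h y (List.mem_cons_of_mem _ hy)),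
      C_pascal (h x (List.mem_cons_self))]
    ring

lemma B_lt_C : ∀ (l : List ℤ) (k x : ℤ), l.Pairwise (· > ·) →
    (∀ i (_ : i < l.length), k - (i : ℤ) ≤ l.getD i 0) → (∀ y ∈ l, y < x) →
    (l.length : ℤ) ≤ k → k ≤ x → 0 ≤ k → B l k < C x k
  | [], k, x, _, _, _, _, hkx, hk => by
    rw [B]; exact C_pos hk hkx
  | y :: ys, k, x, hp, hidx, hlt, hlen, hkx, hk => by
    have hlen' : ((ys.length : ℤ)) + 1 ≤ k := by
      have : (y :: ys).length = ys.length + 1 := by simp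
      rw [this] at hlen; push_cast at hlen; omega
    have hky : k ≤ y := by simpa using hidx 0 (by simp)
    have hidx' : ∀ i (_ : i < ys.length), k - 1 - (i : ℤ) ≤ ys.getD i 0 := by
      intro i hi
      have := hidx (i + 1) (by simp; omega)
      rw [List.getD_cons_succ] at this
      push_cast at this ⊢
      linarith
    have ih := B_lt_C ys (k - 1) y hp.of_cons hidx'
      (fun z hz => List.rel_of_pairwise_cons hp hz)
      (by omega) (by omega) (by omega)
    have hyx : y + 1 ≤ x := by
      have := hlt y (List.mem_cons_self); omega
    calc B (y :: ys) k = C y k + B ys (k - 1) := rfl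
      _ < C y k + C y (k - 1) := by omega
      _ = C (y + 1) k := by
          have h1 : y + 1 - 1 = y := by ring
          rw [C_pascal (show (1:ℤ) ≤ y + 1 by omega), h1]
      _ ≤ C x k := C_mono hk (by omega) hyx

lemma entries_nonneg {l : List ℤ} {k : ℤ}
    (hidx : ∀ i (_ : i < l.length), k - (i : ℤ) ≤ l.getD i 0)
    (hlen : (l.length : ℤ) ≤ k) : ∀ y ∈ l, 0 ≤ y := by
  intro y hy
  obtain ⟨i, hi, rfl⟩ := List.mem_iff_getElem.1 hy
  have h1 := hidx i hi
  rw [List.getD_eq_getElem l 0 hi] at h1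
  have : (i : ℤ) < l.length := by exact_mod_cast hi
  omega

lemma tail_idx {y : ℤ} {ys : List ℤ} {k : ℤ}
    (hidx : ∀ i (_ : i < (y :: ys).length), k - (i : ℤ) ≤ (y :: ys).getD i 0) :
    ∀ i (_ : i < ys.length), (k - 1) - (i : ℤ) ≤ ys.getD i 0 := by
  intro i hi
  have := hidx (i + 1) (by simp; omega)
  rw [List.getD_cons_succ] at this
  push_cast at this ⊢
  linarith

lemma C_le_B {y : ℤ} {ys : List ℤ} {k : ℤ}
    (hidx : ∀ i (_ : i < (y :: ys).length), k - (i : ℤ) ≤ (y :: ys).getD i 0)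
    (hlen : ((y :: ys).length : ℤ) ≤ k) : C y k ≤ B (y :: ys) k := by
  have h0 : ∀ z ∈ ys, 0 ≤ z :=
    fun z hz => entries_nonneg (tail_idx hidx)
      (by simp at hlen ⊢; push_cast at hlen ⊢; omega) z hz
  have := B_nonneg (l := ys) (j := k - 1) h0
  rw [B]; omega

lemma B_head_lt {y : ℤ} {ys : List ℤ} {k : ℤ}
    (hp : (y :: ys).Pairwise (· > ·))
    (hidx : ∀ i (_ : i < (y :: ys).length), k - (i : ℤ) ≤ (y :: ys).getD i 0)
    (hlen : ((y :: ys).length : ℤ) ≤ k) (hk : 0 ≤ k) :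
    B (y :: ys) k < C (y + 1) k := by
  have hlen' : ((ys.length : ℤ)) + 1 ≤ k := by
    have : (y :: ys).length = ys.length + 1 := by simp
    rw [this] at hlen; push_cast at hlen; omega
  have hky : k ≤ y := by simpa using hidx 0 (by simp)
  have h := B_lt_C ys (k - 1) y hp.of_cons (tail_idx hidx)
    (fun z hz => List.rel_of_pairwise_cons hp hz) (by omega) (by omega) (by omega)
  calc B (y :: ys) k = C y k + B ys (k - 1) := rfl
    _ < C y k + C y (k - 1) := by omega
    _ = C (y + 1) k := by
        have h1 : y + 1 - 1 = y := by ring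
        rw [C_pascal (show (1:ℤ) ≤ y + 1 by omega), h1]

lemma B_unique : ∀ (a : List ℤ) (k : ℤ) (d : List ℤ),
    a.Pairwise (· > ·) → (a.length : ℤ) ≤ k →
    (∀ i (_ : i < a.length), k - (i : ℤ) ≤ a.getD i 0) →
    d.Pairwise (· > ·) → (d.length : ℤ) ≤ k →
    (∀ i (_ : i < d.length), k - (i : ℤ) ≤ d.getD i 0) →
    0 ≤ k → B a k = B d k → a = d
  | [], k, [], _, _, _, _, _, _, _, _ => rfl
  | [], k, y :: ys, _, _, _, hp2, hl2, hi2, hk, heq => by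
    exfalso
    have h1 : C y k ≤ B (y :: ys) k := C_le_B hi2 hl2
    have h2 : 0 < C y k := C_pos hk (by simpa using hi2 0 (by simp))
    have heq' : (0 : ℤ) = B (y :: ys) k := heq
    omega
  | x :: xs, k, [], hp1, hl1, hi1, _, _, _, hk, heq => by
    exfalso
    have h1 : C x k ≤ B (x :: xs) k := C_le_B hi1 hl1
    have h2 : 0 < C x k := C_pos hk (by simpa using hi1 0 (by simp))
    have heq' : B (x :: xs) k = 0 := heq
    omega
  | x :: xs, k, y :: ys, hp1, hl1, hi1, hp2, hl2, hi2, hk, heq => by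
    have hxy : x = y := by
      by_contra hne
      have hb1l : C x k ≤ B (x :: xs) k := C_le_B hi1 hl1
      have hb1u : B (x :: xs) k < C (x + 1) k := B_head_lt hp1 hi1 hl1 hk
      have hb2l : C y k ≤ B (y :: ys) k := C_le_B hi2 hl2
      have hb2u : B (y :: ys) k < C (y + 1) k := B_head_lt hp2 hi2 hl2 hk
      have hkx : k ≤ x := by simpa using hi1 0 (by simp)
      have hky : k ≤ y := by simpa using hi2 0 (by simp)
      rcases lt_or_gt_of_ne hne with h | h
      · have := C_mono hk (show (0:ℤ) ≤ x + 1 by omega) (show x + 1 ≤ y by omega)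
        omega
      · have := C_mono hk (show (0:ℤ) ≤ y + 1 by omega) (show y + 1 ≤ x by omega)
        omega
    subst hxy
    have hteq : B xs (k - 1) = B ys (k - 1) := by
      simp only [B] at heq; omega
    have hlen1 : ((xs.length : ℤ)) ≤ k - 1 := by
      simp only [List.length_cons] at hl1; push_cast at hl1 ⊢; omega
    have hlen2 : ((ys.length : ℤ)) ≤ k - 1 := by
      simp only [List.length_cons] at hl2; push_cast at hl2 ⊢; omega
    have hk' : 0 ≤ k - 1 ∨ xs = [] ∧ ys = [] := by
      rcases le_or_gt 1 k with h | h
      · left; omega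
      · right
        constructor
        · cases xs with
          | nil => rfl
          | cons z zs => exfalso; simp at hlen1; push_cast at hlen1; omega
        · cases ys with
          | nil => rfl
          | cons z zs => exfalso; simp at hlen2; push_cast at hlen2; omega
    rcases hk' with hk' | ⟨h1, h2⟩
    · rw [B_unique xs (k - 1) ys hp1.of_cons hlen1 (tail_idx hi1)
        hp2.of_cons hlen2 (tail_idx hi2) hk' hteq]
    · rw [h1, h2]

end KKAux



variable {n : ℕ}

def casc : List (Fin n) → ℕ → Finset (Finset (Fin n))
  | [], _ => ∅
  | _ :: _, 0 => {∅}
  | x :: xs, r + 1 => powersetCard (r + 1) (Finset.Iio x) ∪ (casc xs r).image (insert x)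

def lcast {n : ℕ} (b : List (Fin n)) : List ℤ := b.map (fun y => (y.val : ℤ))

@[simp] lemma lcast_nil {n : ℕ} : lcast ([] : List (Fin n)) = [] := rfl
@[simp] lemma lcast_cons {n : ℕ} (x : Fin n) (xs : List (Fin n)) :
    lcast (x :: xs) = (x.val : ℤ) :: lcast xs := rfl

namespace KKAux

lemma mem_casc_le : ∀ {b : List (Fin n)} {r : ℕ} {A : Finset (Fin n)},
    A ∈ casc b r → ∀ z ∈ A, ∃ e ∈ b, z ≤ e
  | [], r, A, hA => by simp [casc] at hA
  | x :: xs, 0, A, hA => by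
    simp [casc] at hA; subst hA; simp
  | x :: xs, r + 1, A, hA => by
    rw [casc, mem_union] at hA
    rcases hA with hA | hA
    · intro z hz
      exact ⟨x, List.mem_cons_self, ((mem_powersetCard.1 hA).1 hz |> mem_Iio.1).le⟩
    · obtain ⟨A', hA', rfl⟩ := mem_image.1 hA
      intro z hz
      rcases mem_insert.1 hz with rfl | hz
      · exact ⟨z, List.mem_cons_self, le_rfl⟩
      · obtain ⟨e, he, hze⟩ := mem_casc_le hA' z hz
        exact ⟨e, List.mem_cons_of_mem _ he, hze⟩

lemma mem_casc_lt_head {x : Fin n} {xs : List (Fin n)} {r : ℕ} {A : Finset (Fin n)}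
    (hp : (x :: xs).Pairwise (· > ·)) (hA : A ∈ casc xs r) : ∀ z ∈ A, z < x := by
  intro z hz
  obtain ⟨e, he, hze⟩ := mem_casc_le hA z hz
  exact hze.trans_lt (List.rel_of_pairwise_cons hp he)

lemma not_mem_of_mem_casc_tail {x : Fin n} {xs : List (Fin n)} {r : ℕ} {A : Finset (Fin n)}
    (hp : (x :: xs).Pairwise (· > ·)) (hA : A ∈ casc xs r) : x ∉ A :=
  fun hx => lt_irrefl x (mem_casc_lt_head hp hA x hx)

lemma casc_sized : ∀ {b : List (Fin n)} {r : ℕ}, b.Pairwise (· > ·) →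
    ∀ {A : Finset (Fin n)}, A ∈ casc b r → A.card = r
  | [], r, _, A, hA => by simp [casc] at hA
  | x :: xs, 0, _, A, hA => by simp [casc] at hA; subst hA; simp
  | x :: xs, r + 1, hp, A, hA => by
    rw [casc, mem_union] at hA
    rcases hA with hA | hA
    · exact (mem_powersetCard.1 hA).2
    · obtain ⟨A', hA', rfl⟩ := mem_image.1 hA
      rw [card_insert_of_notMem (not_mem_of_mem_casc_tail hp hA'),
        casc_sized hp.of_cons hA']

lemma casc_card : ∀ (b : List (Fin n)) (r : ℕ), b.Pairwise (· > ·) →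
    ((casc b r).card : ℤ) = B (lcast b) (r : ℤ)
  | [], r, _ => by simp [casc, B]
  | x :: xs, 0, _ => by
    rw [lcast_cons, B, B_neg (by norm_num)]
    rw [show ((0 : ℕ) : ℤ) = (0 : ℤ) by norm_num, C_eq (by positivity) le_rfl]
    simp [casc]
  | x :: xs, r + 1, hp => by
    rw [casc, lcast_cons, B]
    have hdisj : Disjoint (powersetCard (r + 1) (Finset.Iio x))
        ((casc xs r).image (insert x)) := by
      rw [disjoint_left]
      intro A hA hA'
      obtain ⟨A', hA'', rfl⟩ := mem_image.1 hA'
      exact (mem_Iio.1 ((mem_powersetCard.1 hA).1 (mem_insert_self x A'))).false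
    rw [card_union_of_disjoint hdisj]
    have himg : ((casc xs r).image (insert x)).card = (casc xs r).card :=
      card_image_of_injOn (fun A hA B hB hAB => by
        rw [← erase_insert (not_mem_of_mem_casc_tail hp hA),
          ← erase_insert (not_mem_of_mem_casc_tail hp hB), hAB])
    rw [himg]
    have hpow : (powersetCard (r + 1) (Finset.Iio x)).card = (x : ℕ).choose (r + 1) := by
      rw [card_powersetCard, Fin.card_Iio]
    rw [hpow]
    have hC : C ((x : ℕ) : ℤ) ((r + 1 : ℕ) : ℤ) = ((x : ℕ).choose (r + 1) : ℤ) := C_coe _ _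
    push_cast at hC ⊢
    rw [casc_card xs r hp.of_cons]
    push_cast
    rw [show ((r : ℤ) + 1 - 1) = (r : ℤ) by ring]
    omega

end KKAux



namespace KKAux

variable {n : ℕ}

lemma casc_lt_closed : ∀ {b : List (Fin n)} {r : ℕ}, b.Pairwise (· > ·) →
    ∀ {A B' : Finset (Fin n)}, A ∈ casc b r →
    toColex B' < toColex A → B'.card = r → B' ∈ casc b r
  | [], r, _, A, B', hA, _, _ => by simp [casc] at hA
  | x :: xs, 0, _, A, B', hA, hlt, _ => by
    simp [casc] at hA
    subst hA
    exact absurd (toColex_empty (α := Fin n) ▸ hlt) (not_lt_bot)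
  | x :: xs, r + 1, hp, A, B', hA, hlt, hcard => by
    rw [casc, mem_union] at hA ⊢
    rcases hA with hA | hA
    · left
      obtain ⟨hsub, hAcard⟩ := mem_powersetCard.1 hA
      refine mem_powersetCard.2 ⟨fun z hz => ?_, hcard⟩
      exact mem_Iio.2 (Colex.forall_lt_mono hlt.le
        (fun z hz => mem_Iio.1 (hsub hz)) z hz)
    · obtain ⟨A', hA', rfl⟩ := mem_image.1 hA
      have hxA' : x ∉ A' := not_mem_of_mem_casc_tail hp hA'
      have hle : ∀ z ∈ B', z ≤ x := by
        refine Colex.forall_le_mono hlt.le (fun z hz => ?_)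
        rcases mem_insert.1 hz with rfl | hz
        · exact le_rfl
        · exact (mem_casc_lt_head hp hA' z hz).le
      by_cases hxB : x ∈ B'
      · right
        have h1 : B' \ {x} = B'.erase x := by rw [sdiff_singleton_eq_erase]
        have h2 : insert x A' \ {x} = A' := by
          rw [sdiff_singleton_eq_erase, erase_insert hxA']
        have hlt' : toColex (B'.erase x) < toColex A' := by
          rw [← h1, ← h2]
          exact (Colex.toColex_sdiff_lt_toColex_sdiff
            (singleton_subset_iff.2 hxB)
            (singleton_subset_iff.2 (mem_insert_self _ _))).2 hlt
        have hcard' : (B'.erase x).card = r := by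
          rw [card_erase_of_mem hxB, hcard]; omega
        have := casc_lt_closed hp.of_cons hA' hlt' hcard'
        exact mem_image.2 ⟨B'.erase x, this, insert_erase hxB⟩
      · left
        refine mem_powersetCard.2 ⟨fun z hz => mem_Iio.2 ?_, hcard⟩
        exact lt_of_le_of_ne (hle z hz) (fun h => hxB (h ▸ hz))

lemma casc_isInitSeg {b : List (Fin n)} {r : ℕ} (hp : b.Pairwise (· > ·)) :
    Colex.IsInitSeg (casc b r) r := by
  constructor
  · intro A hA
    exact casc_sized hp hA
  · intro A B' hA hB
    exact casc_lt_closed hp hA hB.1 hB.2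

lemma casc_shadow_sub : ∀ {b : List (Fin n)} {s : ℕ}, b.Pairwise (· > ·) →
    (∀ i (h : i < b.length), s + 1 ≤ i + (b[i]'h).val) →
    casc b s ⊆ Finset.shadow (casc b (s + 1))
  | [], s, _, _ => by simp [casc]
  | x :: xs, 0, hp, hidx => by
    intro A hA
    simp [casc] at hA
    subst hA
    have hx1 : 1 ≤ x.val := by
      have h : 0 + 1 ≤ 0 + x.val := hidx 0 (by simp)
      omega
    have hn : 0 < n := x.pos
    have h0x : (⟨0, hn⟩ : Fin n) < x := by
      rw [Fin.lt_def]; exact hx1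
    refine mem_shadow_iff.2 ⟨{⟨0, hn⟩}, ?_, ⟨0, hn⟩, mem_singleton_self _, by simp⟩
    rw [casc, mem_union]
    left
    exact mem_powersetCard.2 ⟨singleton_subset_iff.2 (mem_Iio.2 h0x), by simp⟩
  | x :: xs, s + 1, hp, hidx => by
    intro A hA
    rw [casc, mem_union] at hA
    rcases hA with hA | hA
    · obtain ⟨hsub, hAcard⟩ := mem_powersetCard.1 hA
      have hx : s + 2 ≤ (Finset.Iio x).card := by
        rw [Fin.card_Iio]
        have h : s + 1 + 1 ≤ 0 + x.val := hidx 0 (by simp)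
        omega
      have hlt : A.card < (Finset.Iio x).card := by omega
      obtain ⟨y, hy, hyA⟩ := exists_of_ssubset
        (Finset.ssubset_iff_subset_ne.2 ⟨hsub, fun h => by rw [h] at hlt; omega⟩)
      refine mem_shadow_iff.2 ⟨insert y A, ?_, y, mem_insert_self _ _, erase_insert hyA⟩
      rw [casc, mem_union]
      left
      exact mem_powersetCard.2
        ⟨insert_subset hy hsub, by rw [card_insert_of_notMem hyA, hAcard]⟩
    · obtain ⟨A', hA', rfl⟩ := mem_image.1 hA
      have hidx' : ∀ i (h : i < xs.length), s + 1 ≤ i + (xs[i]'h).val := by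
        intro i hi
        have := hidx (i + 1) (by simpa using Nat.succ_lt_succ hi)
        rw [List.getElem_cons_succ] at this
        omega
      have hAshadow := casc_shadow_sub hp.of_cons hidx' hA'
      obtain ⟨Y, hY, y, hyY, hYA⟩ := mem_shadow_iff.1 hAshadow
      have hyx : y ≠ x := by
        intro h
        exact absurd (mem_casc_lt_head hp hY y hyY) (by simp [h])
      refine mem_shadow_iff.2 ⟨insert x Y, ?_, y, mem_insert_of_mem hyY, ?_⟩
      · rw [casc, mem_union]
        right
        exact mem_image.2 ⟨Y, hY, rfl⟩
      · rw [erase_insert_of_ne (fun h => hyx h.symm), hYA]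

end KKAux



namespace KKAux

variable {n : ℕ}

lemma numKK {r : ℕ} (hr : 1 ≤ r) {T : Finset (Finset (Fin n))}
    (hT : (T : Set (Finset (Fin n))).Sized r) (b : List (Fin n))
    (hp : b.Pairwise (· > ·))
    (hidx : ∀ i (h : i < b.length), r ≤ i + (b[i]'h).val)
    (hcard : B (lcast b) (r : ℤ) ≤ (T.card : ℤ)) :
    B (lcast b) ((r : ℤ) - 1) ≤ ((Finset.shadow T).card : ℤ) := by
  obtain ⟨s, rfl⟩ : ∃ s, r = s + 1 := ⟨r - 1, by omega⟩
  have h1 : ((casc b (s + 1)).card : ℤ) = B (lcast b) ((s + 1 : ℕ) : ℤ) :=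
    casc_card b (s + 1) hp
  have hle : (casc b (s + 1)).card ≤ T.card := by
    have := hcard; rw [← h1] at this; exact_mod_cast this
  have hkk : (Finset.shadow (casc b (s + 1))).card ≤ (Finset.shadow T).card := by
    have h := Finset.kruskal_katona hT hle (casc_isInitSeg hp)
    convert h using 3 <;> exact Subsingleton.elim _ _
  have hsub : casc b s ⊆ Finset.shadow (casc b (s + 1)) :=
    casc_shadow_sub hp hidx
  have h2 : ((casc b s).card : ℤ) = B (lcast b) ((s : ℕ) : ℤ) := casc_card b s hp
  have h3 : (casc b s).card ≤ (Finset.shadow (casc b (s + 1))).card :=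
    card_le_card hsub
  have : ((s + 1 : ℕ) : ℤ) - 1 = ((s : ℕ) : ℤ) := by push_cast; ring
  rw [this, ← h2]
  exact_mod_cast h3.trans hkk

end KKAux



namespace KKAux

variable {n : ℕ}

lemma lift_list : ∀ (l : List ℤ), (∀ y ∈ l, 0 ≤ y ∧ y < (n : ℤ)) →
    ∃ bf : List (Fin n), lcast bf = l
  | [], _ => ⟨[], rfl⟩
  | y :: ys, h => by
    obtain ⟨bf, hbf⟩ := lift_list ys (fun z hz => h z (List.mem_cons_of_mem _ hz))
    obtain ⟨h0, h1⟩ := h y (List.mem_cons_self)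
    refine ⟨⟨y.toNat, by omega⟩ :: bf, ?_⟩
    rw [lcast_cons, hbf]
    congr 1
    simp [Int.toNat_of_nonneg h0]

lemma one_le_entries {a : List ℤ} {k : ℕ}
    (hidx : ∀ i (_ : i < a.length), (k : ℤ) - (i : ℤ) ≤ a.getD i 0)
    (hlen : (a.length : ℤ) ≤ (k : ℤ)) : ∀ y ∈ a, 1 ≤ y := by
  intro y hy
  obtain ⟨i, hi, rfl⟩ := List.mem_iff_getElem.1 hy
  have h1 := hidx i hi
  rw [List.getD_eq_getElem a 0 hi] at h1
  have : (i : ℤ) < a.length := by exact_mod_cast hi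
  omega

end KKAux

open KKAux

/-- Degree bound in an extremal family: `|S(x)| ≤ B(a-1, k-1)` for every `x`. -/
theorem extremal_degree_bound
    (n k : ℕ) (hk : 2 ≤ k) (hkn : k ≤ n)
    (S : Finset (Finset (Fin n))) (hS : S.Nonempty) (hScard : ∀ X ∈ S, X.card = k)
    (hext : IsExtremal k S)
    (a : List ℤ) (ha : IsKBinom k (S.card : ℤ) a)
    (x : Fin n) :
    ((S.filter (fun X => x ∈ X)).card : ℤ) ≤ B (a.map (· - 1)) ((k : ℤ) - 1) := by
  classical
  obtain ⟨⟨hchain, hlen, hidx⟩, hBa⟩ := ha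
  have hpair : a.Pairwise (· > ·) := List.isChain_iff_pairwise.1 hchain
  have hklen : ((a.length : ℤ)) ≤ (k : ℤ) := by exact_mod_cast hlen
  have hidx' : ∀ i (_ : i < a.length), (k : ℤ) - (i : ℤ) ≤ a.getD i 0 :=
    fun i hi => hidx i hi
  -- identify the shadow cardinality using uniqueness of the decomposition
  obtain ⟨d, ⟨⟨hdchain, hdlen, hdidx⟩, hBd⟩, hsh⟩ := hext
  have hda : d = a :=
    B_unique d (k : ℤ) a (List.isChain_iff_pairwise.1 hdchain)
      (by exact_mod_cast hdlen) (fun i hi => hdidx i hi)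
      hpair hklen hidx' (by omega) (by rw [← hBd, ← hBa])
  rw [hda] at hsh
  clear hBd hdchain hdlen hdidx hda
  -- a is nonempty
  rcases a with _ | ⟨a0, as⟩
  · exfalso
    have : (S.card : ℤ) = 0 := hBa
    have := hS.card_pos
    omega
  -- entries of a are between 1 and n
  have hSn : (S.card : ℤ) ≤ C (n : ℤ) (k : ℤ) := by
    have hsub : S ⊆ powersetCard k (univ : Finset (Fin n)) :=
      fun X hX => mem_powersetCard.2 ⟨subset_univ X, hScard X hX⟩
    have h1 : S.card ≤ n.choose k := by
      have := card_le_card hsub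
      rwa [card_powersetCard, card_univ, Fintype.card_fin] at this
    rw [C_coe]
    exact_mod_cast h1
  have ha0n : a0 ≤ (n : ℤ) := by
    by_contra hcon
    push_neg at hcon
    have h1 : C ((n : ℤ) + 1) (k : ℤ) ≤ C a0 (k : ℤ) :=
      C_mono (by omega) (by omega) (by omega)
    have h2 : C a0 (k : ℤ) ≤ B (a0 :: as) (k : ℤ) := C_le_B hidx' hklen
    have h3 : C ((n : ℤ) + 1) (k : ℤ) = C (n : ℤ) (k : ℤ) + C (n : ℤ) ((k : ℤ) - 1) := by
      have he : (n : ℤ) + 1 - 1 = (n : ℤ) := by ring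
      rw [C_pascal (by omega), he]
    have h4 : 0 < C (n : ℤ) ((k : ℤ) - 1) :=
      C_pos (by omega : (0:ℤ) ≤ (k : ℤ) - 1) (by omega)
    rw [← hBa] at h2
    omega
  have hone : ∀ y ∈ a0 :: as, 1 ≤ y := one_le_entries hidx' hklen
  have hmem : ∀ y ∈ a0 :: as, 1 ≤ y ∧ y ≤ (n : ℤ) := by
    intro y hy
    refine ⟨hone y hy, ?_⟩
    rcases List.mem_cons.1 hy with rfl | hy'
    · exact ha0n
    · exact (List.rel_of_pairwise_cons hpair hy').le.trans ha0n
  -- lift a - 1 to Fin n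
  set b : List ℤ := (a0 :: as).map (· - 1) with hb
  have hbmem : ∀ z ∈ b, 0 ≤ z ∧ z < (n : ℤ) := by
    intro z hz
    obtain ⟨y, hy, rfl⟩ := List.mem_map.1 hz
    obtain ⟨h1, h2⟩ := hmem y hy
    exact ⟨by omega, by omega⟩
  obtain ⟨bf, hbf⟩ := lift_list b hbmem
  have hbpair : b.Pairwise (· > ·) :=
    hpair.map _ (fun u v huv => by omega)
  have hbfpair : bf.Pairwise (· > ·) := by
    have h1 : (bf.map (fun y : Fin n => (y.val : ℤ))).Pairwise (· > ·) := by
      rw [show bf.map (fun y : Fin n => (y.val : ℤ)) = lcast bf from rfl, hbf]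
      exact hbpair
    rw [List.pairwise_map] at h1
    exact h1.imp (fun {u v} h => by
      rw [gt_iff_lt, Fin.lt_def]; exact_mod_cast h)
  have hbflen : bf.length = (a0 :: as).length := by
    have h1 := congrArg List.length hbf
    simpa [lcast, hb] using h1
  have hbfidx : ∀ i (h : i < bf.length), (k - 1) ≤ i + (bf[i]'h).val := by
    intro i hi
    have hi' : i < (a0 :: as).length := hbflen ▸ hi
    have h1 := hidx' i hi'
    have h2 : ((bf[i]'hi).val : ℤ) = (lcast bf).getD i 0 := by
      rw [List.getD_eq_getElem _ 0 (by simpa [lcast] using hi)]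
      simp [lcast]
    rw [hbf] at h2
    have h3 : b.getD i 0 = (a0 :: as).getD i 0 - 1 := by
      rw [hb, List.getD_eq_getElem _ 0 (by simpa using hi'),
        List.getD_eq_getElem _ 0 hi', List.getElem_map]
    omega
  -- the link family
  set F := S.filter (fun X => x ∈ X) with hF
  set T := F.image (fun X => X.erase x) with hT
  have hmemF : ∀ X ∈ F, X ∈ S ∧ x ∈ X := fun X hX => mem_filter.1 hX
  have hTcard : T.card = F.card := by
    apply card_image_of_injOn
    intro X hX Y hY hXY
    have hx1 := (hmemF X hX).2
    have hx2 := (hmemF Y hY).2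
    dsimp only at hXY
    rw [← insert_erase hx1, hXY, insert_erase hx2]
  have hTsized : (T : Set (Finset (Fin n))).Sized (k - 1) := by
    intro Y hY
    obtain ⟨X, hX, rfl⟩ := mem_image.1 hY
    rw [card_erase_of_mem (hmemF X hX).2, hScard X (hmemF X hX).1]
  have hTsh : T ⊆ Finset.shadow S := by
    intro Y hY
    obtain ⟨X, hX, rfl⟩ := mem_image.1 hY
    exact mem_shadow_iff.2 ⟨X, (hmemF X hX).1, x, (hmemF X hX).2, rfl⟩
  have hxT : ∀ u ∈ Finset.shadow T, x ∉ u := by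
    intro u hu
    obtain ⟨Y, hY, y, hyY, rfl⟩ := mem_shadow_iff.1 hu
    obtain ⟨X, hX, rfl⟩ := mem_image.1 hY
    intro hxu
    exact notMem_erase x X (mem_of_mem_erase hxu)
  have hins : (Finset.shadow T).image (insert x) ⊆ Finset.shadow S := by
    intro u' hu'
    obtain ⟨u, hu, rfl⟩ := mem_image.1 hu'
    obtain ⟨Y, hY, y, hyY, rfl⟩ := mem_shadow_iff.1 hu
    obtain ⟨X, hX, rfl⟩ := mem_image.1 hY
    have hxX : x ∈ X := (hmemF X hX).2
    have hyx : y ≠ x := ne_of_mem_erase hyY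
    have hkey : insert x ((X.erase x).erase y) = X.erase y := by
      have hcomm : (X.erase x).erase y = (X.erase y).erase x := by
        ext z; simp only [mem_erase]; tauto
      rw [hcomm]
      exact insert_erase (mem_erase.2 ⟨fun h => hyx h.symm, hxX⟩)
    rw [hkey]
    exact mem_shadow_iff.2 ⟨X, (hmemF X hX).1, y, mem_of_mem_erase hyY, rfl⟩
  have hdisj : Disjoint T ((Finset.shadow T).image (insert x)) := by
    rw [disjoint_left]
    intro Y hY hY'
    obtain ⟨X, hX, rfl⟩ := mem_image.1 hY
    obtain ⟨u, hu, huY⟩ := mem_image.1 hY'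
    have : x ∈ X.erase x := huY ▸ mem_insert_self x u
    exact notMem_erase x X this
  have hinj : ((Finset.shadow T).image (insert x)).card = (Finset.shadow T).card := by
    apply card_image_of_injOn
    intro u hu v hv huv
    rw [← erase_insert (hxT u hu), huv, erase_insert (hxT v hv)]
  have hcount : T.card + (Finset.shadow T).card ≤ (Finset.shadow S).card := by
    have h1 : (T ∪ (Finset.shadow T).image (insert x)).card
        = T.card + (Finset.shadow T).card := by
      rw [card_union_of_disjoint hdisj, hinj]
    rw [← h1]
    exact card_le_card (union_subset hTsh hins)
  -- conclude
  by_contra hcon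
  push_neg at hcon
  have hble : B (lcast bf) (((k - 1 : ℕ) : ℤ)) ≤ (T.card : ℤ) := by
    rw [hbf]
    have h3 : (((k : ℕ) - 1 : ℕ) : ℤ) = (k : ℤ) - 1 := by push_cast; omega
    rw [h3, hTcard]
    exact hcon.le
  have hKK := numKK (by omega : 1 ≤ k - 1) hTsized bf hbfpair hbfidx hble
  have h3 : (((k : ℕ) - 1 : ℕ) : ℤ) = (k : ℤ) - 1 := by push_cast; omega
  rw [h3, hbf] at hKK
  have hpas : B (a0 :: as) ((k : ℤ) - 1)
      = B b ((k : ℤ) - 1) + B b ((k : ℤ) - 1 - 1) := B_pascal hone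
  have hcount' : (T.card : ℤ) + ((Finset.shadow T).card : ℤ)
      ≤ ((Finset.shadow S).card : ℤ) := by exact_mod_cast hcount
  rw [hTcard] at hcount'
  omega
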